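/- For any fixed f ∈ ℚ_p[x] with f(0) ≠ 0 and any ε > 0, there exist infinitely many irreducible polynomials g ∈ ℤ_p[x] such that (1) the Newton polygon of f ∘ g has the same number of segments as that of f, and (2) every root of f ∘ g in an algebraic closure of ℚ_p has p-adic valuation less than ε. -/

import Mathlib

/-- The lower convex hull of a set of points in `ℝ × (ℝ ∪ {∞})`: the points lying
within the vertical strip spanned by `S` and on or above every affine lower bound of `S`. -/
def LCH (S : Set (ℝ × EReal)) : Set (ℝ × EReal) :=
  {q | (∃ s ∈ S, s.1 ≤ q.1) ∧ (∃ s ∈ S, q.1 ≤ s.1) ∧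
    ∀ a b : ℝ, (∀ s ∈ S, ((a * s.1 + b : ℝ) : EReal) ≤ s.2) →
      ((a * q.1 + b : ℝ) : EReal) ≤ q.2}
open Polynomial

/- The `p`-adic valuation of an element of `ℚ_[p]`, with `ord_p 0 = ∞`. -/
open Classical in
noncomputable def ordp (p : ℕ) [Fact p.Prime] (x : ℚ_[p]) : EReal :=
  if x = 0 then ⊤ else ((x.valuation : ℝ) : EReal)

/-- The points `(i, ord_p a_i)` attached to a polynomial `f = Σ a_i x^i` over `ℚ_[p]`. -/
def NPpts {p : ℕ} [Fact p.Prime] (f : Polynomial ℚ_[p]) : Set (ℝ × EReal) :=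
  {q | ∃ i : ℕ, i ≤ f.natDegree ∧ q = ((i : ℝ), ordp p (f.coeff i))}

/-- The `p`-adic Newton polygon of `f`, as a region in the plane. -/
noncomputable def NP {p : ℕ} [Fact p.Prime] (f : Polynomial ℚ_[p]) : Set (ℝ × EReal) :=
  LCH (NPpts f)

/-- `f` is pure at `p` of slope `s`: its Newton polygon is the single segment from
`(0, ord_p a_0)` to `(natDegree f, ord_p a_0 + s · natDegree f)`. -/
def IsPure {p : ℕ} [Fact p.Prime] (f : Polynomial ℚ_[p]) (s : ℝ) : Prop :=
  f.coeff 0 ≠ 0 ∧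
  (∀ i ≤ f.natDegree,
    ((((f.coeff 0).valuation : ℝ) + s * i : ℝ) : EReal) ≤ ordp p (f.coeff i)) ∧
  ordp p (f.coeff f.natDegree)
    = ((((f.coeff 0).valuation : ℝ) + s * f.natDegree : ℝ) : EReal)

/-- `f` is `p^r`-pure: one segment, `ord_p a_0 = r` and `ord_p a_n = 0`. -/
def IsPrPure {p : ℕ} [Fact p.Prime] (f : Polynomial ℚ_[p]) (r : ℕ) : Prop :=
  1 ≤ f.natDegree ∧ (f.coeff 0).valuation = (r : ℤ) ∧
  IsPure f (-(r : ℝ) / f.natDegree)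

/-- The Newton polygon of `f` has exactly `N` segments, with vertices `(x j, y j)`:
the `x j` are strictly increasing from `0` to `deg f`, the valuations of the coefficients
at the vertices are the `y j`, the consecutive slopes are strictly increasing, and all
points `(i, ord_p a_i)` lie on or above the segment through the neighbouring vertices. -/
def HasNPVertices {p : ℕ} [Fact p.Prime] (f : Polynomial ℚ_[p]) (N : ℕ)
    (x : Fin (N + 1) → ℕ) (y : Fin (N + 1) → ℝ) : Prop :=
  x 0 = 0 ∧ x (Fin.last N) = f.natDegree ∧
  (∀ j : Fin N, x j.castSucc < x j.succ) ∧
  StrictMono (fun j : Fin N =>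
    (y j.succ - y j.castSucc) / ((x j.succ : ℝ) - (x j.castSucc : ℝ))) ∧
  (∀ j : Fin (N + 1), ordp p (f.coeff (x j)) = ((y j : ℝ) : EReal)) ∧
  (∀ j : Fin N, ∀ i : ℕ, x j.castSucc ≤ i → i ≤ x j.succ →
    (((y j.castSucc +
        (y j.succ - y j.castSucc) / ((x j.succ : ℝ) - (x j.castSucc : ℝ))
          * ((i : ℝ) - (x j.castSucc : ℝ))) : ℝ) : EReal) ≤ ordp p (f.coeff i))

section Aux
open Finset
variable {p : ℕ} [hp : Fact p.Prime]

lemma one_lt_pR : (1:ℝ) < p := by exact_mod_cast hp.out.one_lt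

lemma ordp_eq_iff {z : ℚ_[p]} {c : ℝ} :
    ordp p z = ((c : ℝ) : EReal) ↔ ‖z‖ = (p:ℝ) ^ (-c) := by
  have hp1 : (1:ℝ) < p := one_lt_pR
  by_cases hz : z = 0
  · simp only [hz, ordp, if_pos rfl, norm_zero]
    constructor
    · intro h; exact absurd h.symm (EReal.coe_ne_top c)
    · intro h
      exact absurd h.symm (ne_of_gt (Real.rpow_pos_of_pos (by positivity) _))
  · rw [ordp, if_neg hz, Padic.norm_eq_zpow_neg_valuation hz]
    rw [show ((p:ℝ) ^ (-z.valuation) : ℝ) = (p:ℝ) ^ ((-z.valuation : ℤ) : ℝ) by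
      rw [Real.rpow_intCast]]
    constructor
    · intro h
      have : ((z.valuation : ℝ)) = c := by exact_mod_cast h
      rw [← this]; push_cast; ring_nf
    · intro h
      have := (Real.rpow_le_rpow_left_iff (y := ((-z.valuation : ℤ) : ℝ)) (z := -c) hp1)
      have h2 : ((-z.valuation : ℤ) : ℝ) = -c := by
        have hinj : Function.Injective fun y : ℝ => (p:ℝ) ^ y := fun u v huv => by
          have h1 := (Real.rpow_le_rpow_left_iff (x := (p:ℝ)) (y := u) (z := v) hp1)
          have h2 := (Real.rpow_le_rpow_left_iff (x := (p:ℝ)) (y := v) (z := u) hp1)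
          simp only at huv
          exact le_antisymm (h1.mp huv.le) (h2.mp huv.ge)
        exact hinj h
      have : (z.valuation : ℝ) = c := by push_cast at h2; linarith
      exact_mod_cast congrArg (fun t : ℝ => (t : EReal)) this

lemma ordp_le_iff {z : ℚ_[p]} {c : ℝ} :
    ((c : ℝ) : EReal) ≤ ordp p z ↔ ‖z‖ ≤ (p:ℝ) ^ (-c) := by
  have hp1 : (1:ℝ) < p := one_lt_pR
  by_cases hz : z = 0
  · subst hz
    simp only [ordp, if_pos rfl, norm_zero]
    constructor
    · intro _; exact le_of_lt (Real.rpow_pos_of_pos (by positivity) _)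
    · intro _; exact le_top
  · rw [ordp, if_neg hz, Padic.norm_eq_zpow_neg_valuation hz,
      show ((p:ℝ) ^ (-z.valuation) : ℝ) = (p:ℝ) ^ ((-z.valuation : ℤ) : ℝ) by
        rw [Real.rpow_intCast],
      Real.rpow_le_rpow_left_iff hp1, EReal.coe_le_coe_iff]
    push_cast
    constructor <;> intro h <;> linarith



lemma pow_X_pow_add_C (d : ℕ) (c : ℚ_[p]) (i : ℕ) :
    ((X:ℚ_[p][X])^d + C c)^i
      = ∑ m ∈ range (i+1), monomial (d*m) ((i.choose m : ℚ_[p]) * c^(i-m)) := by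
  rw [add_pow]
  refine Finset.sum_congr rfl fun m hm => ?_
  rw [← pow_mul, ← C_pow, ← C_mul_X_pow_eq_monomial, ← C_eq_natCast (R := ℚ_[p]), ]
  rw [mul_assoc, ← C_mul, mul_comm (c ^ (i-m))]
  ring

lemma coeff_comp_eq (f : ℚ_[p][X]) (d : ℕ) (c : ℚ_[p]) (k : ℕ) :
    (f.comp ((X:ℚ_[p][X])^d + C c)).coeff k
      = ∑ i ∈ range (f.natDegree + 1), f.coeff i *
          ∑ m ∈ range (i+1), (if d*m = k then (i.choose m : ℚ_[p]) * c^(i-m) else 0) := by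
  rw [comp_eq_sum_left]
  rw [Polynomial.sum_over_range (f := fun e a => C a * ((X:ℚ_[p][X])^d + C c) ^ e) f (by simp)]
  rw [finset_sum_coeff]
  refine Finset.sum_congr rfl fun i _ => ?_
  rw [coeff_C_mul, pow_X_pow_add_C, finset_sum_coeff]
  congr 1
  refine Finset.sum_congr rfl fun m _ => ?_
  rw [coeff_monomial]

lemma coeff_comp_not_dvd (f : ℚ_[p][X]) (d : ℕ) (c : ℚ_[p]) (k : ℕ) (h : ¬ d ∣ k) :
    (f.comp ((X:ℚ_[p][X])^d + C c)).coeff k = 0 := by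
  rw [coeff_comp_eq]
  refine Finset.sum_eq_zero fun i _ => ?_
  rw [Finset.sum_eq_zero, mul_zero]
  intro m _
  rw [if_neg]
  rintro rfl
  exact h ⟨m, rfl⟩

lemma coeff_comp_mul (f : ℚ_[p][X]) (d : ℕ) (hd : 0 < d) (c : ℚ_[p]) (m : ℕ) :
    (f.comp ((X:ℚ_[p][X])^d + C c)).coeff (d*m)
      = ∑ i ∈ range (f.natDegree + 1), f.coeff i *
          (if m ≤ i then (i.choose m : ℚ_[p]) * c^(i-m) else 0) := by
  rw [coeff_comp_eq]
  refine Finset.sum_congr rfl fun i _ => ?_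
  congr 1
  have : ∀ m' ∈ range (i+1), (if d*m' = d*m then (i.choose m' : ℚ_[p]) * c^(i-m') else 0)
      = (if m' = m then (i.choose m' : ℚ_[p]) * c^(i-m') else 0) := by
    intro m' _
    congr 1
    simp [Nat.mul_right_cancel_iff hd, mul_comm d m', mul_comm d m, Nat.mul_left_cancel_iff hd]
  rw [Finset.sum_congr rfl this, Finset.sum_ite_eq' (range (i+1)) m
      (fun m' => (i.choose m' : ℚ_[p]) * c^(i-m'))]
  simp [Nat.lt_succ_iff]

lemma ordp_zero' : ordp p (0 : ℚ_[p]) = ⊤ := by simp [ordp]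

lemma norm_natCast_le_one (k : ℕ) : ‖(k : ℚ_[p])‖ ≤ 1 := by
  have := Padic.norm_int_le_one (p := p) (k : ℤ)
  push_cast at this
  exact this

lemma NP_comp (f : Polynomial ℚ_[p]) (N : ℕ) (x : Fin (N+1) → ℕ) (y : Fin (N+1) → ℝ)
    (hf : HasNPVertices f N x y) (d r : ℕ) (hd : 0 < d)
    (hr : (∑ i ∈ range (f.natDegree+1), ‖f.coeff i‖) * ((p:ℝ)⁻¹)^r
            < (p:ℝ) ^ (-(Finset.univ.sup' ⟨0, mem_univ 0⟩ y))) :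
    HasNPVertices (f.comp ((X:Polynomial ℚ_[p])^d + C ((p:ℚ_[p])^r))) N (fun j => d * x j) y := by
  obtain ⟨hx0, hxlast, hxlt, hslope, hvert, hseg⟩ := hf
  have hp1 : (1:ℝ) < p := one_lt_pR
  have hp0 : (0:ℝ) < p := by linarith
  set n := f.natDegree with hn
  set c : ℚ_[p] := (p:ℚ_[p])^r with hc
  set g : Polynomial ℚ_[p] := (X:Polynomial ℚ_[p])^d + C c with hg
  set A : ℝ := ∑ i ∈ range (n+1), ‖f.coeff i‖ with hA
  set Ymax : ℝ := Finset.univ.sup' ⟨0, mem_univ 0⟩ y with hY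
  set qr : ℝ := ((p:ℝ)⁻¹)^r with hqr
  have hqr0 : 0 ≤ qr := by positivity
  have hqr1 : qr ≤ 1 := by
    apply pow_le_one₀ (by positivity)
    rw [inv_le_one_iff₀]; right; linarith
  have hxmono : StrictMono x := Fin.strictMono_iff_lt_succ.mpr hxlt
  have hxle : ∀ j, x j ≤ n := fun j => hxlast ▸ hxmono.monotone (Fin.le_last j)
  have hvert' : ∀ j, ‖f.coeff (x j)‖ = (p:ℝ) ^ (-(y j)) := fun j => ordp_eq_iff.mp (hvert j)
  have hA0 : 0 ≤ A := Finset.sum_nonneg fun i _ => norm_nonneg _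
  have hAqr0 : 0 ≤ A * qr := mul_nonneg hA0 hqr0
  have hAi : ∀ i ∈ range (n+1), ‖f.coeff i‖ ≤ A := by
    intro i hi
    exact Finset.single_le_sum (f := fun i => ‖f.coeff i‖) (fun j _ => norm_nonneg _) hi
  have hyY : ∀ j, y j ≤ Ymax := fun j => Finset.le_sup' y (mem_univ j)
  have hrY : ∀ t : ℝ, t ≤ Ymax → A * qr < (p:ℝ) ^ (-t) := by
    intro t ht
    calc A * qr < (p:ℝ) ^ (-Ymax) := hr
    _ ≤ (p:ℝ) ^ (-t) := by
        rw [Real.rpow_le_rpow_left_iff hp1]; linarith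
  have hcnorm : ‖c‖ = qr := by rw [hc, norm_pow, Padic.norm_p, hqr]
  -- bound on the tail terms
  have hterm : ∀ m i : ℕ, i ∈ range (n+1) → m < i →
      ‖f.coeff i * ((i.choose m : ℚ_[p]) * c^(i-m))‖ ≤ A * qr := by
    intro m i hi hmi
    rw [norm_mul, norm_mul, norm_pow, hcnorm]
    have h1 : ‖f.coeff i‖ ≤ A := hAi i hi
    have h2 : ‖(i.choose m : ℚ_[p])‖ ≤ 1 := norm_natCast_le_one _
    have h3 : qr ^ (i - m) ≤ qr := by
      have : qr ^ (i - m) ≤ qr ^ 1 :=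
        pow_le_pow_of_le_one hqr0 hqr1 (by omega)
      simpa using this
    calc ‖f.coeff i‖ * (‖(i.choose m : ℚ_[p])‖ * qr ^ (i-m))
        ≤ A * (1 * qr) := by
          apply mul_le_mul h1 _ (by positivity) (by positivity)
          apply mul_le_mul h2 h3 (by positivity) (by norm_num)
      _ = A * qr := by ring
  -- the sum formula for coefficients of the composition
  have hcm : ∀ m : ℕ, (f.comp g).coeff (d*m)
      = ∑ i ∈ range (n + 1), f.coeff i *
          (if m ≤ i then (i.choose m : ℚ_[p]) * c^(i-m) else 0) := fun m =>
    coeff_comp_mul f d hd c m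
  -- exact value at vertices
  have hcoeffvert : ∀ j : Fin (N+1), ‖(f.comp g).coeff (d * x j)‖ = (p:ℝ)^(-(y j)) := by
    intro j
    rw [hcm (x j)]
    have hmem : x j ∈ range (n+1) := by simp [Nat.lt_succ_iff, hxle j]
    rw [← Finset.sum_erase_add _ _ hmem]
    have hTv : f.coeff (x j) * (if x j ≤ x j then ((x j).choose (x j) : ℚ_[p]) * c^(x j - x j) else 0)
        = f.coeff (x j) := by simp
    rw [hTv]
    have hrest : ‖∑ i ∈ (range (n+1)).erase (x j),
        f.coeff i * (if x j ≤ i then (i.choose (x j) : ℚ_[p]) * c^(i - x j) else 0)‖ ≤ A * qr := by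
      apply IsUltrametricDist.norm_sum_le_of_forall_le_of_nonneg hAqr0
      · intro i hi
        rcases Finset.mem_erase.mp hi with ⟨hne, hi'⟩
        by_cases hle : x j ≤ i
        · rw [if_pos hle]
          exact hterm (x j) i hi' (by omega)
        · rw [if_neg hle]
          simp only [mul_zero, norm_zero]
          exact hAqr0
    have hrestlt : ‖∑ i ∈ (range (n+1)).erase (x j),
        f.coeff i * (if x j ≤ i then (i.choose (x j) : ℚ_[p]) * c^(i - x j) else 0)‖
        < ‖f.coeff (x j)‖ := by
      rw [hvert' j]
      exact lt_of_le_of_lt hrest (hrY (y j) (hyY j))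
    set R := ∑ i ∈ (range (n+1)).erase (x j),
        f.coeff i * (if x j ≤ i then (i.choose (x j) : ℚ_[p]) * c^(i - x j) else 0)
    have h1 : ‖R + f.coeff (x j)‖ ≤ max ‖R‖ ‖f.coeff (x j)‖ :=
      IsUltrametricDist.norm_add_le_max _ _
    have h2 : ‖f.coeff (x j)‖ ≤ max ‖R + f.coeff (x j)‖ ‖R‖ := by
      calc ‖f.coeff (x j)‖ = ‖(R + f.coeff (x j)) + (-R)‖ := by ring_nf
      _ ≤ max ‖R + f.coeff (x j)‖ ‖-R‖ := IsUltrametricDist.norm_add_le_max _ _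
      _ = max ‖R + f.coeff (x j)‖ ‖R‖ := by rw [norm_neg]
    have h3 : ‖f.coeff (x j)‖ ≤ ‖R + f.coeff (x j)‖ := by
      rcases max_cases ‖R + f.coeff (x j)‖ ‖R‖ with ⟨heq, _⟩ | ⟨heq, _⟩
      · rwa [heq] at h2
      · rw [heq] at h2; linarith
    have : ‖R + f.coeff (x j)‖ = ‖f.coeff (x j)‖ :=
      le_antisymm (by rw [max_eq_right (le_of_lt hrestlt)] at h1; exact h1) h3
    rw [this, hvert' j]
  -- segment bound
  have hcoeffseg : ∀ j : Fin N, ∀ m : ℕ, x j.castSucc ≤ m → m ≤ x j.succ →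
      ‖(f.comp g).coeff (d*m)‖ ≤
        (p:ℝ)^(-(y j.castSucc +
          (y j.succ - y j.castSucc) / ((x j.succ : ℝ) - (x j.castSucc : ℝ))
            * ((m:ℝ) - (x j.castSucc : ℝ)))) := by
    intro j m hm1 hm2
    set sj : ℝ := (y j.succ - y j.castSucc) / ((x j.succ : ℝ) - (x j.castSucc : ℝ)) with hsj
    set L : ℝ := y j.castSucc + sj * ((m:ℝ) - (x j.castSucc : ℝ)) with hL
    have hden : (0:ℝ) < (x j.succ : ℝ) - (x j.castSucc : ℝ) := by
      have := hxlt j; rw [sub_pos]; exact_mod_cast this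
    have hsid : sj * ((x j.succ : ℝ) - (x j.castSucc : ℝ)) = y j.succ - y j.castSucc := by
      rw [hsj]; field_simp
    have hmc1 : ((x j.castSucc : ℕ) : ℝ) ≤ (m:ℝ) := by exact_mod_cast hm1
    have hmc2 : (m:ℝ) ≤ ((x j.succ : ℕ) : ℝ) := by exact_mod_cast hm2
    have hLY : L ≤ Ymax := by
      rcases le_or_gt sj 0 with hs | hs
      · have : sj * ((m:ℝ) - (x j.castSucc : ℝ)) ≤ 0 := by nlinarith
        calc L ≤ y j.castSucc := by rw [hL]; linarith
        _ ≤ Ymax := hyY _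
      · have : sj * ((m:ℝ) - (x j.castSucc : ℝ)) ≤ y j.succ - y j.castSucc := by nlinarith
        calc L ≤ y j.succ := by rw [hL]; linarith
        _ ≤ Ymax := hyY _
    rw [hcm m]
    apply IsUltrametricDist.norm_sum_le_of_forall_le_of_nonneg (by positivity)
    intro i hi
    by_cases hle : m ≤ i
    · rcases eq_or_lt_of_le hle with heq | hlt
      · subst heq
        simp only [if_pos le_rfl, Nat.choose_self, Nat.cast_one, tsub_self, pow_zero,
          one_mul, mul_one]
        exact ordp_le_iff.mp (hseg j m hm1 hm2)
      · rw [if_pos hle]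
        calc ‖f.coeff i * ((i.choose m : ℚ_[p]) * c^(i-m))‖ ≤ A * qr := hterm m i hi hlt
        _ ≤ (p:ℝ) ^ (-L) := le_of_lt (hrY L hLY)
    · rw [if_neg hle]; simp only [mul_zero, norm_zero]; positivity
  -- assemble
  have hdeg_g : g.natDegree = d := by
    rw [hg]; exact natDegree_X_pow_add_C
  refine ⟨by simp [hx0], ?_, ?_, ?_, ?_, ?_⟩
  · show d * x (Fin.last N) = (f.comp g).natDegree
    rw [natDegree_comp, hdeg_g, hxlast, mul_comm]
  · intro j; exact (Nat.mul_lt_mul_left hd).mpr (hxlt j)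
  · have hrew : (fun j : Fin N =>
        (y j.succ - y j.castSucc) / (((d * x j.succ : ℕ) : ℝ) - ((d * x j.castSucc : ℕ) : ℝ)))
        = fun j : Fin N =>
        ((y j.succ - y j.castSucc) / ((x j.succ : ℝ) - (x j.castSucc : ℝ))) / (d : ℝ) := by
      funext j
      push_cast
      rw [div_div]
      congr 1
      ring
    rw [hrew]
    exact hslope.div_const (by exact_mod_cast hd)
  · intro j
    rw [ordp_eq_iff]
    exact hcoeffvert j
  · intro j i hi1 hi2
    by_cases hdvd : d ∣ i
    · obtain ⟨m, rfl⟩ := hdvd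
      have hm1 : x j.castSucc ≤ m := Nat.le_of_mul_le_mul_left hi1 hd
      have hm2 : m ≤ x j.succ := Nat.le_of_mul_le_mul_left hi2 hd
      have key := hcoeffseg j m hm1 hm2
      have hexp : y j.castSucc +
          (y j.succ - y j.castSucc) / (((d * x j.succ : ℕ) : ℝ) - ((d * x j.castSucc : ℕ) : ℝ))
            * (((d * m : ℕ):ℝ) - ((d * x j.castSucc : ℕ) : ℝ))
          = y j.castSucc +
          (y j.succ - y j.castSucc) / ((x j.succ : ℝ) - (x j.castSucc : ℝ))
            * ((m:ℝ) - (x j.castSucc : ℝ)) := by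
        have hd0 : (d:ℝ) ≠ 0 := by exact_mod_cast hd.ne'
        have hden' : ((x j.succ : ℝ) - (x j.castSucc : ℝ)) ≠ 0 := by
          have h := hxlt j
          have h2 : ((x j.castSucc : ℕ):ℝ) < ((x j.succ : ℕ):ℝ) := by exact_mod_cast h
          · intro hcon; rw [sub_eq_zero] at hcon; rw [hcon] at h2; exact lt_irrefl _ h2
        have h1 : (((d * x j.succ : ℕ) : ℝ) - ((d * x j.castSucc : ℕ) : ℝ))
            = (d:ℝ) * ((x j.succ : ℝ) - (x j.castSucc : ℝ)) := by push_cast; ring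
        have h2 : (((d * m : ℕ):ℝ) - ((d * x j.castSucc : ℕ) : ℝ))
            = (d:ℝ) * ((m:ℝ) - (x j.castSucc:ℝ)) := by push_cast; ring
        rw [h1, h2]
        congr 1
        field_simp
      rw [hexp]
      exact ordp_le_iff.mpr key
    · have : (f.comp g).coeff i = 0 := coeff_comp_not_dvd f d c i (by
        intro hcon; exact hdvd hcon)
      rw [this, ordp_zero']
      exact le_top



lemma irr_X_pow_add_p (d : ℕ) (hd : 0 < d) :
    Irreducible ((X:Polynomial ℚ_[p])^d + C (p:ℚ_[p])) := by
  have hmonic : ((X:Polynomial ℤ_[p])^d + C (p:ℤ_[p])).Monic :=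
    monic_X_pow_add_C _ hd.ne'
  have hmap : ((X:Polynomial ℤ_[p])^d + C (p:ℤ_[p])).map (algebraMap ℤ_[p] ℚ_[p])
      = (X:Polynomial ℚ_[p])^d + C (p:ℚ_[p]) := by
    rw [Polynomial.map_add, Polynomial.map_pow, map_X, map_C]
    norm_num
  rw [← hmap]
  rw [← Polynomial.Monic.irreducible_iff_irreducible_map_fraction_map hmonic]
  set P : Ideal ℤ_[p] := Ideal.span {(p:ℤ_[p])} with hP
  have hp0 : (p:ℤ_[p]) ≠ 0 := by
    exact_mod_cast (Nat.cast_ne_zero (R := ℤ_[p])).mpr hp.out.ne_zero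
  have hPprime : P.IsPrime := (Ideal.span_singleton_prime hp0).mpr PadicInt.prime_p
  apply Polynomial.irreducible_of_eisenstein_criterion hPprime
  · rw [(monic_X_pow_add_C _ hd.ne' : ((X:Polynomial ℤ_[p])^d + C (p:ℤ_[p])).Monic).leadingCoeff]
    intro hmem
    rw [hP, Ideal.mem_span_singleton] at hmem
    exact PadicInt.prime_p.not_unit (isUnit_of_dvd_one hmem)
  · intro k hk
    rw [degree_X_pow_add_C hd] at hk
    have hkd : k < d := by exact_mod_cast hk
    rw [coeff_add, coeff_X_pow, if_neg hkd.ne, coeff_C, zero_add]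
    by_cases h0 : k = 0
    · rw [if_pos h0, hP, Ideal.mem_span_singleton]
    · rw [if_neg h0]; exact P.zero_mem
  · rw [degree_X_pow_add_C hd]
    exact_mod_cast hd
  · rw [coeff_add, coeff_X_pow, if_neg hd.ne, coeff_C, if_pos rfl, zero_add]
    intro hmem
    rw [hP, Ideal.span_singleton_pow, Ideal.mem_span_singleton] at hmem
    have : (p:ℤ_[p]) ∣ 1 := by
      have h2 : (p:ℤ_[p]) * (p:ℤ_[p]) ∣ (p:ℤ_[p]) * 1 := by
        rwa [mul_one, ← pow_two]
      exact (mul_dvd_mul_iff_left hp0).mp h2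
    exact PadicInt.prime_p.not_unit (isUnit_of_dvd_one this)
  · exact hmonic.isPrimitive



lemma irreducible_comp_C_mul_X {h : Polynomial ℚ_[p]} (c : ℚ_[p]) (hc : c ≠ 0)
    (hh : Irreducible h) : Irreducible (h.comp (C c * X)) := by
  have key : ∀ b b' : ℚ_[p], b * b' = 1 →
      (Polynomial.aeval (C b * X : Polynomial ℚ_[p])).comp
        (Polynomial.aeval (C b' * X : Polynomial ℚ_[p]))
      = AlgHom.id ℚ_[p] (Polynomial ℚ_[p]) := by
    intro b b' hbb
    apply Polynomial.algHom_ext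
    simp only [AlgHom.coe_comp, Function.comp_apply, aeval_X, AlgHom.coe_id, id_eq]
    rw [map_mul, aeval_X, aeval_C, Polynomial.algebraMap_eq, ← mul_assoc, ← C_mul,
      mul_comm b' b, hbb, C_1, one_mul]
  let e : Polynomial ℚ_[p] ≃ₐ[ℚ_[p]] Polynomial ℚ_[p] :=
    AlgEquiv.ofAlgHom (Polynomial.aeval (C c * X)) (Polynomial.aeval (C c⁻¹ * X))
      (key c c⁻¹ (mul_inv_cancel₀ hc)) (key c⁻¹ c (inv_mul_cancel₀ hc))
  have he : e h = h.comp (C c * X) := by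
    show Polynomial.aeval (C c * X) h = h.comp (C c * X)
    rw [Polynomial.comp, Polynomial.aeval_def, Polynomial.algebraMap_eq]
  rw [← he]
  exact (MulEquiv.irreducible_iff (e : Polynomial ℚ_[p] ≃* Polynomial ℚ_[p])).mpr hh

lemma irr_X_pow_add_p_pow (d t : ℕ) (hd : 0 < d)
    (hbase : Irreducible ((X:Polynomial ℚ_[p])^d + C (p:ℚ_[p]))) :
    Irreducible ((X:Polynomial ℚ_[p])^d + C ((p:ℚ_[p])^(d*t+1))) := by
  have hpne : (p:ℚ_[p]) ≠ 0 := by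
    exact_mod_cast (Nat.cast_ne_zero (R := ℚ_[p])).mpr hp.out.ne_zero
  have hc : ((p:ℚ_[p])^t)⁻¹ ≠ 0 := inv_ne_zero (pow_ne_zero _ hpne)
  have h2 := irreducible_comp_C_mul_X _ hc hbase
  have hunit : IsUnit (C ((p:ℚ_[p])^(d*t))) :=
    Polynomial.isUnit_C.mpr (isUnit_iff_ne_zero.mpr (pow_ne_zero _ hpne))
  have heq : (X:Polynomial ℚ_[p])^d + C ((p:ℚ_[p])^(d*t+1))
      = C ((p:ℚ_[p])^(d*t)) *
        (((X:Polynomial ℚ_[p])^d + C (p:ℚ_[p])).comp (C ((p:ℚ_[p])^t)⁻¹ * X)) := by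
    rw [add_comp, pow_comp, X_comp, C_comp, mul_pow, ← C_pow, mul_add, ← mul_assoc, ← C_mul]
    have : (p:ℚ_[p])^(d*t) * (((p:ℚ_[p])^t)⁻¹)^d = 1 := by
      rw [← inv_pow, ← pow_mul, mul_comm t d]
      rw [← mul_pow, mul_inv_cancel₀ hpne, one_pow]
    rw [this, C_1, one_mul, ← C_mul]
    congr 1
    rw [pow_succ, mul_comm]
  rw [heq]
  exact (irreducible_isUnit_mul hunit).mpr h2



lemma root_lb (f : Polynomial ℚ_[p]) (hf0 : f.coeff 0 ≠ 0)
    (K : Type) [NormedField K] [NormedAlgebra ℚ_[p] K] (β : K)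
    (hroot : Polynomial.aeval β f = 0) :
    min 1 (‖f.coeff 0‖ / ((∑ i ∈ Finset.range f.natDegree, ‖f.coeff (i+1)‖) + 1)) ≤ ‖β‖ := by
  set n := f.natDegree with hn
  set S : ℝ := ∑ i ∈ Finset.range n, ‖f.coeff (i+1)‖ with hS
  have hS0 : 0 ≤ S := Finset.sum_nonneg fun i _ => norm_nonneg _
  rcases le_or_gt ‖β‖ 1 with hb | hb
  · have heq : (0:K) = ∑ i ∈ range (n+1), f.coeff i • β ^ i := by
      rw [← hroot, Polynomial.aeval_eq_sum_range]
    rw [Finset.sum_range_succ'] at heq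
    have heq2 : f.coeff 0 • (1:K) = -∑ i ∈ range n, f.coeff (i+1) • β ^ (i+1) := by
      rw [eq_comm, neg_eq_iff_add_eq_zero]
      simpa [pow_zero] using heq.symm
    have hnorm : ‖f.coeff 0‖ ≤ S * ‖β‖ := by
      have h1 : ‖f.coeff 0‖ = ‖∑ i ∈ range n, f.coeff (i+1) • β ^ (i+1)‖ := by
        rw [← norm_neg (∑ i ∈ range n, f.coeff (i+1) • β ^ (i+1)), ← heq2, norm_smul,
          norm_one, mul_one]
      rw [h1]
      calc ‖∑ i ∈ range n, f.coeff (i+1) • β ^ (i+1)‖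
          ≤ ∑ i ∈ range n, ‖f.coeff (i+1) • β ^ (i+1)‖ := norm_sum_le _ _
        _ ≤ ∑ i ∈ range n, ‖f.coeff (i+1)‖ * ‖β‖ := by
            apply Finset.sum_le_sum
            intro i _
            rw [norm_smul, norm_pow]
            apply mul_le_mul_of_nonneg_left _ (norm_nonneg _)
            calc ‖β‖^(i+1) ≤ ‖β‖^1 := pow_le_pow_of_le_one (norm_nonneg _) hb (by omega)
              _ = ‖β‖ := pow_one _
        _ = (∑ i ∈ range n, ‖f.coeff (i+1)‖) * ‖β‖ := by rw [Finset.sum_mul]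
    have : ‖f.coeff 0‖ / (S+1) ≤ ‖β‖ := by
      rw [div_le_iff₀ (by linarith)]
      calc ‖f.coeff 0‖ ≤ S * ‖β‖ := hnorm
        _ ≤ ‖β‖ * (S+1) := by nlinarith [norm_nonneg β]
    exact le_trans (min_le_right _ _) this
  · exact le_trans (min_le_left _ _) hb.le

end Aux

/-- For any fixed `f ∈ ℚ_p[x]` with `f(0) ≠ 0` whose Newton polygon has `N` segments, and
any `ε > 0`, there are infinitely many irreducible `g ∈ ℤ_p[x]` such that the Newton polygon
of `f ∘ g` also has `N` segments, and every root of `f ∘ g` (in any normed extension of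
`ℚ_p`, e.g. `ℚ̄_p`) has valuation `< ε`, i.e. norm `> p^{-ε}`. -/
theorem infinitely_many_stretching (p : ℕ) [Fact p.Prime]
    (f : Polynomial ℚ_[p]) (hf0 : f.coeff 0 ≠ 0)
    (N : ℕ) (x : Fin (N + 1) → ℕ) (y : Fin (N + 1) → ℝ)
    (hf : HasNPVertices f N x y) (ε : ℝ) (hε : 0 < ε) :
    {g : Polynomial ℚ_[p] |
      (∀ i, ‖g.coeff i‖ ≤ 1) ∧ Irreducible g ∧
      (∃ (x' : Fin (N + 1) → ℕ) (y' : Fin (N + 1) → ℝ),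
        HasNPVertices (f.comp g) N x' y') ∧
      (∀ (K : Type) [NormedField K] [NormedAlgebra ℚ_[p] K],
        ∀ α : K, Polynomial.aeval α (f.comp g) = 0 → (p : ℝ) ^ (-ε) < ‖α‖)}.Infinite := by
  classical
  have hp1 : (1:ℝ) < p := one_lt_pR
  have hp0 : (0:ℝ) < p := by linarith
  set n := f.natDegree with hn
  set A : ℝ := ∑ i ∈ Finset.range (n+1), ‖f.coeff i‖ with hA
  have hA0 : 0 ≤ A := Finset.sum_nonneg fun i _ => norm_nonneg _
  set Ymax : ℝ := Finset.univ.sup' ⟨0, Finset.mem_univ 0⟩ y with hY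
  set ρ : ℝ := (p:ℝ) ^ (-Ymax) with hρ
  have hρ0 : 0 < ρ := Real.rpow_pos_of_pos hp0 _
  set S : ℝ := ∑ i ∈ Finset.range n, ‖f.coeff (i+1)‖ with hS
  have hS0 : 0 ≤ S := Finset.sum_nonneg fun i _ => norm_nonneg _
  set c0 : ℝ := min 1 (‖f.coeff 0‖ / (S+1)) with hc0
  have hc00 : 0 < c0 := by
    apply lt_min one_pos
    apply div_pos (norm_pos_iff.mpr hf0) (by linarith)
  set q : ℝ := (p:ℝ)⁻¹ with hq
  have hq0 : 0 ≤ q := by positivity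
  have hq1 : q < 1 := by
    rw [hq, inv_lt_one_iff₀]; right; exact hp1
  obtain ⟨R1, hR1⟩ := exists_pow_lt_of_lt_one (show (0:ℝ) < ρ/(A+1) by positivity) hq1
  obtain ⟨R2, hR2⟩ := exists_pow_lt_of_lt_one (show (0:ℝ) < c0/2 by positivity) hq1
  set b : ℝ := (p:ℝ) ^ (-ε) with hb
  have hb0 : 0 ≤ b := le_of_lt (Real.rpow_pos_of_pos hp0 _)
  have hb1 : b < 1 := Real.rpow_lt_one_of_one_lt_of_neg hp1 (by linarith)
  obtain ⟨D, hD⟩ := exists_pow_lt_of_lt_one (show (0:ℝ) < c0/2 by positivity) hb1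
  set t : ℕ := R1 + R2 with ht
  set F : ℕ → Polynomial ℚ_[p] := fun k =>
    (X : Polynomial ℚ_[p])^(D+k+1) + C ((p:ℚ_[p])^((D+k+1)*t+1)) with hF
  refine Set.infinite_of_injective_forall_mem (f := F) ?_ ?_
  · intro k1 k2 hk
    have h1 := congrArg Polynomial.natDegree hk
    simp only [hF, natDegree_X_pow_add_C] at h1
    omega
  · intro k
    set d : ℕ := D + k + 1 with hd'
    have hd : 0 < d := by omega
    set r : ℕ := d*t+1 with hr'
    have hrt : t ≤ r := by
      have : 1*t ≤ d*t := Nat.mul_le_mul_right t hd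
      omega
    have hqr_le : ∀ m : ℕ, m ≤ r → q^r ≤ q^m := fun m hm =>
      pow_le_pow_of_le_one hq0 hq1.le hm
    have hqrR1 : q^r < ρ/(A+1) :=
      lt_of_le_of_lt (hqr_le R1 (by omega)) hR1
    have hqrR2 : q^r < c0/2 :=
      lt_of_le_of_lt (hqr_le R2 (by omega)) hR2
    have hcnorm : ‖(p:ℚ_[p])^r‖ = q^r := by
      rw [norm_pow, Padic.norm_p, hq]
    have hrA : A * q^r < ρ := by
      calc A * q^r ≤ (A+1) * q^r := by nlinarith [pow_nonneg hq0 r]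
        _ < (A+1) * (ρ/(A+1)) := by
            apply mul_lt_mul_of_pos_left hqrR1 (by linarith)
        _ = ρ := by field_simp
    refine ⟨?_, ?_, ?_, ?_⟩
    · -- coefficients bounded by 1
      intro i
      show ‖((X : Polynomial ℚ_[p])^d + C ((p:ℚ_[p])^r)).coeff i‖ ≤ 1
      rw [coeff_add, coeff_X_pow, coeff_C]
      by_cases hi0 : i = 0
      · rw [if_neg (by omega : ¬ i = d), if_pos hi0, zero_add, hcnorm]
        exact le_trans (pow_le_one₀ hq0 hq1.le) le_rfl
      · by_cases hid : i = d
        · rw [if_pos hid, if_neg hi0, add_zero, norm_one]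
        · rw [if_neg hid, if_neg hi0, add_zero, norm_zero]; norm_num
    · -- irreducible
      show Irreducible ((X : Polynomial ℚ_[p])^d + C ((p:ℚ_[p])^(d*t+1)))
      exact irr_X_pow_add_p_pow d t hd (irr_X_pow_add_p d hd)
    · -- Newton polygon
      exact ⟨fun j => d * x j, y, NP_comp f N x y hf d r hd hrA⟩
    · -- roots
      intro K _ _ α hα
      rw [Polynomial.aeval_comp] at hα
      set β : K := Polynomial.aeval α (F k) with hβ
      have hβlb : c0 ≤ ‖β‖ := root_lb f hf0 K β hα
      have hβval : β = α^d + algebraMap ℚ_[p] K ((p:ℚ_[p])^r) := by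
        rw [hβ, hF]
        simp only [map_add, map_pow, aeval_X, aeval_C]
        rfl
      have hαd : ‖α‖^d ≥ c0 - q^r := by
        have h1 : α^d = β - algebraMap ℚ_[p] K ((p:ℚ_[p])^r) := by
          rw [hβval]; ring
        have h2 : ‖algebraMap ℚ_[p] K ((p:ℚ_[p])^r)‖ = q^r := by
          rw [norm_algebraMap', hcnorm]
        calc ‖α‖^d = ‖α^d‖ := (norm_pow _ _).symm
          _ = ‖β - algebraMap ℚ_[p] K ((p:ℚ_[p])^r)‖ := by rw [h1]
          _ ≥ ‖β‖ - ‖algebraMap ℚ_[p] K ((p:ℚ_[p])^r)‖ := norm_sub_norm_le _ _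
          _ ≥ c0 - q^r := by rw [h2]; linarith
      have hbd : b^d < c0/2 := by
        calc b^d ≤ b^D := pow_le_pow_of_le_one hb0 hb1.le (by omega)
          _ < c0/2 := hD
      have hfinal : b^d < ‖α‖^d := by
        calc b^d < c0/2 := hbd
          _ ≤ ‖α‖^d := by linarith [hαd, hqrR2]
      by_contra hcon
      push_neg at hcon
      have : ‖α‖^d ≤ b^d := pow_le_pow_left₀ (norm_nonneg _) hcon d
      linarith
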